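/- Let Γ be an n-space group. An affinity α = a+A of E^n (with a ∈ E^n and A ∈ GL(n,ℝ)) satisfies αγα⁻¹ = γ for every γ ∈ Γ if and only if A = I and a ∈ Span(Z(Γ)). In particular, the centralizer of Γ in the group of affinities of E^n equals the centralizer of Γ in Isom(E^n), and both equal the group of translations {v + I : v ∈ Span(Z(Γ))}. -/

import Mathlib

noncomputable section

abbrev Euc (n : ℕ) : Type := EuclideanSpace ℝ (Fin n)

abbrev AffG (n : ℕ) : Type := Euc n ≃ᵃ[ℝ] Euc n

/-- The translation `x ↦ a + x` as an affinity of `Eⁿ`. -/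
def transl {n : ℕ} (a : Euc n) : AffG n := AffineEquiv.constVAdd ℝ (Euc n) a

/-- `Span(H)` : the linear span of the translation vectors of `H`. -/
def spanOf {n : ℕ} (H : Subgroup (AffG n)) : Submodule ℝ (Euc n) :=
  Submodule.span ℝ {a : Euc n | transl a ∈ H}

/-- An `n`-space group: a group of isometries acting properly discontinuously
and cocompactly on `Eⁿ`. -/
def IsSpaceGroup {n : ℕ} (Γ : Subgroup (AffG n)) : Prop :=
  (∀ f ∈ Γ, Isometry (⇑f)) ∧
  (∀ K : Set (Euc n), IsCompact K →
    {γ : AffG n | γ ∈ Γ ∧ ((⇑γ '' K) ∩ K).Nonempty}.Finite) ∧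
  (∃ K : Set (Euc n), IsCompact K ∧ ∀ x : Euc n, ∃ γ ∈ Γ, γ x ∈ K)

/-- `N` is a complete normal subgroup of `Γ`:  it is normal in `Γ` and
equals `{a+A ∈ Γ : a ∈ V ∧ V^⊥ ⊆ Fix A}` where `V = Span N`
(for `f = a + A` we have `a = f 0` and `A = f.linear`). -/
def IsCompleteNormal {n : ℕ} (N Γ : Subgroup (AffG n)) : Prop :=
  N ≤ Γ ∧ (∀ γ ∈ Γ, ∀ ν ∈ N, γ * ν * γ⁻¹ ∈ N) ∧
  (∀ f : AffG n, f ∈ N ↔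
    f ∈ Γ ∧ f 0 ∈ spanOf N ∧ ∀ x ∈ (spanOf N)ᗮ, f.linear x = x)

/-- Membership in the kernel `K = {b+B ∈ Γ : b ∈ V^⊥ ∧ V ⊆ Fix B}`
of the action of `Γ` on `V`. -/
def InKernel {n : ℕ} (Γ : Subgroup (AffG n)) (V : Submodule ℝ (Euc n)) (f : AffG n) : Prop :=
  f ∈ Γ ∧ f 0 ∈ Vᗮ ∧ ∀ x ∈ V, f.linear x = x

end


noncomputable section
namespace SGP

open RealInnerProductSpace

variable {n : ℕ}

lemma apply_eq (f : AffG n) (v : Euc n) : f v = f.linear v + f 0 := by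
  have := f.map_vadd' (0 : Euc n) v
  simp only [vadd_eq_add, add_zero, zero_add] at this
  exact this

lemma lin_eq (f : AffG n) (v : Euc n) : f.linear v = f v - f 0 := by
  rw [apply_eq f v]; abel

lemma sub_apply (f : AffG n) (x y : Euc n) : f x - f y = f.linear (x - y) := by
  rw [apply_eq f x, apply_eq f y, map_sub]; abel

lemma mul_apply' (f g : AffG n) (x : Euc n) : (f * g) x = f (g x) := rfl

lemma lin_mul (f g : AffG n) (v : Euc n) :
    (f * g).linear v = f.linear (g.linear v) := by
  rw [lin_eq (f*g) v, mul_apply', mul_apply', lin_eq g v, ← sub_apply f]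

lemma inv_apply_eq (f : AffG n) (v : Euc n) : f (f⁻¹ v) = v := by
  show (f * f⁻¹) v = v
  rw [mul_inv_cancel]; rfl

lemma lin_inv_apply (f : AffG n) (v : Euc n) :
    f.linear ((f⁻¹).linear v) = v := by
  rw [← lin_mul, mul_inv_cancel]; rfl

lemma transl_apply (a x : Euc n) : transl a x = a + x := rfl

/-- extensionality from value at 0 and linear part -/
lemma affg_ext {f g : AffG n} (h0 : f 0 = g 0)
    (hl : ∀ v, f.linear v = g.linear v) : f = g := by
  apply DFunLike.ext
  intro x
  rw [apply_eq f x, apply_eq g x, h0, hl]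

variable {Γ : Subgroup (AffG n)}

/-- linear parts of elements of Γ preserve norms -/
lemma lin_norm (hΓ : IsSpaceGroup Γ) {γ : AffG n} (hγ : γ ∈ Γ) (v : Euc n) : ‖γ.linear v‖ = ‖v‖ := by
  have h := (hΓ.1 γ hγ).dist_eq v 0
  rw [lin_eq, ← dist_eq_norm]
  simpa [dist_eq_norm] using h

/-- linear parts of elements of Γ preserve inner products -/
lemma lin_inner (hΓ : IsSpaceGroup Γ) {γ : AffG n} (hγ : γ ∈ Γ) (x y : Euc n) :
    ⟪γ.linear x, γ.linear y⟫ = ⟪x, y⟫ := by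
  have h2 : ∀ u w : Euc n, ⟪u, w⟫ = (‖u + w‖^2 - ‖u‖^2 - ‖w‖^2)/2 := by
    intro u w
    rw [@norm_add_sq_real]; ring
  rw [h2, h2, ← map_add, lin_norm hΓ hγ, lin_norm hΓ hγ, lin_norm hΓ hγ]

/-- finiteness of bounded subsets of Γ -/
lemma finite_ball (hΓ : IsSpaceGroup Γ) (B : ℝ) : {γ : AffG n | γ ∈ Γ ∧ ‖γ 0‖ ≤ B}.Finite := by
  rcases le_or_gt 0 B with hB | hB
  · apply Set.Finite.subset (hΓ.2.1 (Metric.closedBall 0 B) (isCompact_closedBall _ _))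
    rintro γ ⟨hγ, hB'⟩
    refine ⟨hγ, γ 0, ⟨⟨0, by simpa using hB, rfl⟩, ?_⟩⟩
    simpa [Metric.mem_closedBall, dist_eq_norm] using hB'
  · convert Set.finite_empty
    ext γ
    simp only [Set.mem_setOf_eq, Set.mem_empty_iff_false, iff_false, not_and]
    intro _
    intro h
    have := norm_nonneg (γ 0)
    linarith

/-- the covering radius -/
lemma exists_R (hΓ : IsSpaceGroup Γ) : ∃ R : ℝ, 1 ≤ R ∧ ∀ x : Euc n, ∃ γ ∈ Γ, ‖γ x‖ ≤ R := by
  obtain ⟨K, hK, hcov⟩ := hΓ.2.2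
  obtain ⟨R, hR⟩ := hK.isBounded.subset_closedBall 0
  refine ⟨max R 1, le_max_right _ _, fun x => ?_⟩
  obtain ⟨γ, hγ, hγx⟩ := hcov x
  refine ⟨γ, hγ, ?_⟩
  have := hR hγx
  simp only [Metric.mem_closedBall, dist_eq_norm, sub_zero] at this
  exact this.trans (le_max_left _ _)

/-- orbit density: every point is within R of an orbit point of 0 -/
lemma orbit_dense (hΓ : IsSpaceGroup Γ) {R : ℝ} (hR : ∀ x : Euc n, ∃ γ ∈ Γ, ‖γ x‖ ≤ R) (x : Euc n) :
    ∃ δ ∈ Γ, ‖δ 0 - x‖ ≤ R := by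
  obtain ⟨γ, hγ, hγx⟩ := hR x
  refine ⟨γ⁻¹, inv_mem hγ, ?_⟩
  have hiso := hΓ.1 γ⁻¹ (inv_mem hγ)
  have : ‖γ⁻¹ 0 - x‖ = dist (γ⁻¹ 0) (γ⁻¹ (γ x)) := by
    rw [dist_eq_norm]
    congr 2
    show x = (γ⁻¹ * γ) x
    rw [inv_mul_cancel]; rfl
  rw [this, hiso.dist_eq, dist_eq_norm, zero_sub, norm_neg]
  exact hγx

/-- KEY (F1): an affinity commuting with all of Γ has trivial linear part. -/
lemma lin_id_of_comm (hΓ : IsSpaceGroup Γ) (b : Euc n) (B : Euc n ≃ₗ[ℝ] Euc n)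
    (hc : ∀ γ ∈ Γ, ∀ x : Euc n, b + B (γ x) = γ (b + B x)) (v : Euc n) : B v = v := by
  obtain ⟨K, hK, hcov⟩ := hΓ.2.2
  obtain ⟨R, hR0, hKR⟩ : ∃ R, 0 ≤ R ∧ K ⊆ Metric.closedBall 0 R := by
    obtain ⟨R, hR⟩ := hK.isBounded.subset_closedBall 0
    exact ⟨max R 0, le_max_right _ _,
      hR.trans (Metric.closedBall_subset_closedBall (le_max_left _ _))⟩
  set Bop := LinearMap.toContinuousLinearMap (B : Euc n →ₗ[ℝ] Euc n) with hBop
  have hBopv : ∀ w, Bop w = B w := fun _ => rfl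
  set M : ℝ := ‖b‖ + (‖Bop‖ + 1) * R with hM
  have claim1 : ∀ y ∈ K, ‖b + B y - y‖ ≤ M := by
    intro y hy
    have hyR : ‖y‖ ≤ R := by
      have := hKR hy
      simpa [Metric.mem_closedBall, dist_eq_norm] using this
    calc ‖b + B y - y‖ ≤ ‖b‖ + ‖B y‖ + ‖y‖ := by
          calc ‖b + B y - y‖ ≤ ‖b + B y‖ + ‖y‖ := norm_sub_le _ _
          _ ≤ ‖b‖ + ‖B y‖ + ‖y‖ := by gcongr; exact norm_add_le _ _
      _ ≤ ‖b‖ + ‖Bop‖ * ‖y‖ + ‖y‖ := by gcongr; rw [← hBopv]; exact Bop.le_opNorm y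
      _ ≤ ‖b‖ + ‖Bop‖ * R + R := by gcongr
      _ = M := by rw [hM]; ring
  have claim2 : ∀ x : Euc n, ‖b + B x - x‖ ≤ M := by
    intro x
    obtain ⟨γ, hγ, hγx⟩ := hcov x
    have hiso := hΓ.1 γ hγ
    have key : ‖b + B x - x‖ = ‖b + B (γ x) - γ x‖ := by
      rw [← dist_eq_norm, ← dist_eq_norm, dist_comm (b + B x) x, ← hiso.dist_eq,
        hc γ hγ x, dist_comm]
    rw [key]
    exact claim1 _ hγx
  -- archimedean conclusion
  have hb : ∀ k : ℕ, (k:ℝ) * ‖B v - v‖ ≤ M + ‖b‖ := by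
    intro k
    have := claim2 ((k:ℝ) • v)
    have heq : b + B ((k:ℝ) • v) - (k:ℝ) • v = b + (k:ℝ) • (B v - v) := by
      rw [map_smul, smul_sub]; abel
    rw [heq] at this
    calc (k:ℝ) * ‖B v - v‖ = ‖(k:ℝ) • (B v - v)‖ := by
          rw [norm_smul, Real.norm_natCast]
      _ ≤ ‖b + (k:ℝ) • (B v - v)‖ + ‖b‖ := by
          have h1 : (k:ℝ) • (B v - v) = (b + (k:ℝ) • (B v - v)) - b := by abel
          calc ‖(k:ℝ) • (B v - v)‖ = ‖(b + (k:ℝ) • (B v - v)) - b‖ := by rw [← h1]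
            _ ≤ ‖b + (k:ℝ) • (B v - v)‖ + ‖b‖ := norm_sub_le _ _
      _ ≤ M + ‖b‖ := by gcongr
  by_contra hv
  have hn : 0 < ‖B v - v‖ := by
    rw [norm_pos_iff, sub_ne_zero]; exact hv
  obtain ⟨k, hk⟩ := exists_nat_gt ((M + ‖b‖) / ‖B v - v‖)
  have := hb k
  have : (k:ℝ) ≤ (M + ‖b‖) / ‖B v - v‖ := (le_div_iff₀ hn).mpr this
  linarith




lemma finite_min {s : Set ℝ} (hs : s.Finite) (hpos : ∀ x ∈ s, 0 < x) :
    ∃ ρ > 0, ∀ x ∈ s, ρ ≤ x := by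
  rcases Set.eq_empty_or_nonempty s with h | h
  · exact ⟨1, one_pos, by simp [h]⟩
  · have ht : hs.toFinset.Nonempty := by
      rwa [Set.Finite.toFinset_nonempty]
    refine ⟨hs.toFinset.min' ht, ?_, ?_⟩
    · apply hpos
      have := hs.toFinset.min'_mem ht
      rwa [Set.Finite.mem_toFinset] at this
    · intro x hx
      exact hs.toFinset.min'_le x (by rwa [Set.Finite.mem_toFinset])

lemma mem_closure_gen (hΓ : IsSpaceGroup Γ) {R : ℝ} (hR : 1 ≤ R)
    (hdense : ∀ x : Euc n, ∃ δ ∈ Γ, ‖δ 0 - x‖ ≤ R) {γ : AffG n} (hγ : γ ∈ Γ) :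
    γ ∈ Subgroup.closure {g : AffG n | g ∈ Γ ∧ ‖g 0‖ ≤ 2*R + 1} := by
  set S : Set (AffG n) := {g : AffG n | g ∈ Γ ∧ ‖g 0‖ ≤ 2*R + 1} with hS
  set H := Subgroup.closure S with hH
  have hSH : ∀ g : AffG n, g ∈ Γ → ‖g 0‖ ≤ 2*R+1 → g ∈ H :=
    fun g h1 h2 => Subgroup.subset_closure ⟨h1, h2⟩
  set c := γ 0 with hc
  set N := ⌈‖c‖⌉₊ with hNdef
  by_cases hN : N = 0
  · apply hSH γ hγ
    have : ‖c‖ ≤ 0 := by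
      rw [hNdef] at hN
      exact Nat.ceil_eq_zero.mp hN
    rw [← hc] at *
    linarith
  · have hN1 : 1 ≤ N := Nat.one_le_iff_ne_zero.mpr hN
    have hNR : (0:ℝ) < (N:ℝ) := by exact_mod_cast Nat.pos_of_ne_zero hN
    have hcN : ‖c‖ ≤ (N:ℝ) := Nat.le_ceil _
    set p : ℕ → Euc n := fun i => (((min i N : ℕ) : ℝ) / (N:ℝ)) • c with hp
    have hch : ∀ i : ℕ, ∃ δ : AffG n, δ ∈ Γ ∧ ‖δ 0 - p i‖ ≤ R := by
      intro i
      obtain ⟨δ, h1, h2⟩ := hdense (p i)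
      exact ⟨δ, h1, h2⟩
    choose δ0 hδ0Γ hδ0 using hch
    set δ : ℕ → AffG n := fun i => if i = 0 then 1 else if N ≤ i then γ else δ0 i with hδ
    have hδΓ : ∀ i, δ i ∈ Γ := by
      intro i
      rw [hδ]
      dsimp only
      split
      · exact one_mem Γ
      · split
        · exact hγ
        · exact hδ0Γ i
    have hpN : ∀ i, N ≤ i → p i = c := by
      intro i hi
      rw [hp]
      dsimp only
      rw [min_eq_right hi, div_self (ne_of_gt hNR), one_smul]
    have hδp : ∀ i, ‖δ i 0 - p i‖ ≤ R := by
      intro i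
      rw [hδ]
      dsimp only
      split
      · rename_i h0
        subst h0
        have : p 0 = 0 := by rw [hp]; simp
        rw [this]
        simpa using (le_trans zero_le_one hR)
      · split
        · rename_i h0 hNi
          rw [hpN i hNi, ← hc]
          simpa using (le_trans zero_le_one hR)
        · exact hδ0 i
    have hstep : ∀ i, ‖p (i+1) - p i‖ ≤ 1 := by
      intro i
      by_cases hi : N ≤ i
      · rw [hpN i hi, hpN (i+1) (le_trans hi (Nat.le_succ i))]
        simp
      · push_neg at hi
        have hi1 : i + 1 ≤ N := hi
        have e1 : min (i+1) N = i + 1 := min_eq_left hi1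
        have e2 : min i N = i := min_eq_left (le_of_lt hi)
        rw [hp]
        dsimp only
        rw [e1, e2, ← sub_smul, norm_smul]
        have : ((i:ℝ)+1) / N - (i:ℝ)/N = 1 / N := by ring
        rw [show (((i+1 : ℕ) : ℝ)) = (i:ℝ)+1 by push_cast; ring, this]
        rw [Real.norm_eq_abs, abs_of_pos (by positivity)]
        rw [div_mul_eq_mul_div, one_mul, div_le_one hNR]
        exact hcN
    have key : ∀ i, δ i ∈ H := by
      intro i
      induction i with
      | zero =>
        have : δ 0 = 1 := by rw [hδ]; simp
        rw [this]; exact one_mem H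
      | succ i ih =>
        have hsplit : δ (i+1) = δ i * ((δ i)⁻¹ * δ (i+1)) := by group
        rw [hsplit]
        apply mul_mem ih
        apply hSH _ (mul_mem (inv_mem (hδΓ i)) (hδΓ (i+1)))
        have e1 : ((δ i)⁻¹ * δ (i+1)) 0 = (δ i)⁻¹ (δ (i+1) 0) := rfl
        have e2 : (δ i)⁻¹ (δ i 0) = 0 := by
          show ((δ i)⁻¹ * δ i) 0 = 0
          rw [inv_mul_cancel]; rfl
        have e3 : ‖(δ i)⁻¹ (δ (i+1) 0)‖ = dist (δ (i+1) 0) (δ i 0) := by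
          have h4 := (hΓ.1 _ (inv_mem (hδΓ i))).dist_eq (δ (i+1) 0) (δ i 0)
          rw [e2] at h4
          rw [← h4, dist_eq_norm, sub_zero]
        rw [e1, e3, dist_eq_norm]
        calc ‖δ (i+1) 0 - δ i 0‖
            = ‖(δ (i+1) 0 - p (i+1)) + (p (i+1) - p i) + (p i - δ i 0)‖ := by
              congr 1; abel
          _ ≤ ‖δ (i+1) 0 - p (i+1)‖ + ‖p (i+1) - p i‖ + ‖p i - δ i 0‖ := by
              exact norm_add₃_le
          _ ≤ R + 1 + R := by
              gcongr
              · exact hδp (i+1)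
              · exact hstep i
              · rw [norm_sub_rev]; exact hδp i
          _ = 2*R + 1 := by ring
    have hfin : δ N = γ := by
      rw [hδ]
      dsimp only
      rw [if_neg hN, if_pos (le_refl N)]
    rw [← hfin]
    exact key N


def Lop (f : AffG n) : Euc n →L[ℝ] Euc n :=
  LinearMap.toContinuousLinearMap (f.linear : Euc n →ₗ[ℝ] Euc n)

lemma Lop_apply (f : AffG n) (v : Euc n) : Lop f v = f.linear v := rfl

lemma lin_inv_fix {ah : Euc n} {γ : AffG n} (h : γ.linear ah = ah) :
    (γ⁻¹).linear ah = ah := by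
  apply γ.linear.injective
  rw [lin_inv_apply γ ah, h]

set_option maxHeartbeats 1600000 in
/-- CR2: approximate translations with definite drift along the invariant direction. -/
lemma approx_transl (hΓ : IsSpaceGroup Γ) {ah : Euc n} (hah : ‖ah‖ = 1)
    (H1 : ∀ γ ∈ Γ, γ.linear ah = ah) {R : ℝ} (hR : 1 ≤ R)
    (hcov : ∀ x : Euc n, ∃ γ ∈ Γ, ‖γ x‖ ≤ R) (ε : ℝ) (hε : 0 < ε) :
    ∃ g ∈ Γ, ⟪g 0, ah⟫ ≤ -1 ∧ (∀ v : Euc n, ‖g.linear v - v‖ ≤ ε * ‖v‖) ∧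
      ‖g 0 - ⟪g 0, ah⟫ • ah‖ ≤ ε := by
  have hah2 : ⟪ah, ah⟫ = 1 := by
    rw [real_inner_self_eq_norm_mul_norm, hah, one_mul]
  -- inner transport
  have hinner : ∀ γ, γ ∈ Γ → ∀ x : Euc n, ⟪γ.linear x, ah⟫ = ⟪x, ah⟫ := by
    intro γ h x
    conv_lhs => rw [← H1 γ h]
    exact lin_inner hΓ h x ah
  -- the family
  have hfam : ∀ m : ℕ, ∃ γ : AffG n, γ ∈ Γ ∧ ‖γ 0 + (m:ℝ) • ah‖ ≤ R := by
    intro m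
    obtain ⟨γ, hγ, h⟩ := hcov ((m:ℝ) • ah)
    refine ⟨γ, hγ, ?_⟩
    have h2 : γ ((m:ℝ) • ah) = γ.linear ((m:ℝ) • ah) + γ 0 := apply_eq γ _
    have hlin : γ.linear ((m:ℝ) • ah) = (m:ℝ) • ah := by
      rw [γ.linear.map_smul, H1 γ hγ]
    rw [hlin] at h2
    have h3 : γ 0 + (m:ℝ) • ah = γ ((m:ℝ) • ah) := by rw [h2]; abel
    rw [h3]; exact h
  choose φ hφΓ hφ using hfam
  set ψ : ℕ → ℝ := fun m => ⟪φ m 0, ah⟫ with hψdef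
  set u : ℕ → Euc n := fun m => φ m 0 - ψ m • ah with hudef
  have hdecomp : ∀ m, φ m 0 = u m + ψ m • ah := by
    intro m
    rw [hudef]
    dsimp only
    rw [sub_add_cancel]
  have hψm : ∀ m : ℕ, |ψ m + m| ≤ R := by
    intro m
    have h1 : ⟪φ m 0 + (m:ℝ) • ah, ah⟫ = ψ m + m := by
      rw [inner_add_left, real_inner_smul_left, hah2, mul_one, hψdef]
    have h2 := abs_real_inner_le_norm (φ m 0 + (m:ℝ) • ah) ah
    rw [h1, hah, mul_one] at h2
    exact h2.trans (hφ m)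
  have hu : ∀ m, ‖u m‖ ≤ 2*R := by
    intro m
    have h1 : u m = (φ m 0 + (m:ℝ) • ah) - ((ψ m + m) • ah) := by
      rw [hudef, add_smul]; abel
    rw [h1]
    calc ‖(φ m 0 + (m:ℝ) • ah) - ((ψ m + m) • ah)‖
        ≤ ‖φ m 0 + (m:ℝ) • ah‖ + ‖(ψ m + m) • ah‖ := norm_sub_le _ _
      _ ≤ R + |ψ m + m| := by
          gcongr
          · exact hφ m
          · rw [norm_smul, Real.norm_eq_abs, hah, mul_one]
      _ ≤ R + R := by gcongr; exact hψm m
      _ = 2*R := by ring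
  have huah : ∀ m, ⟪u m, ah⟫ = 0 := by
    intro m
    rw [hudef]
    simp only [inner_sub_left, real_inner_smul_left, hah2, mul_one]
    rw [hψdef]; ring
  -- pigeonhole
  set δc : ℝ := ε / (6*(R+1)) with hδcdef
  have hδc : 0 < δc := by
    rw [hδcdef]; positivity
  set X : Set ((Euc n →L[ℝ] Euc n) × Euc n) :=
    Metric.closedBall 0 1 ×ˢ Metric.closedBall 0 (2*R) with hXdef
  have hX : IsCompact X := (isCompact_closedBall _ _).prod (isCompact_closedBall _ _)
  obtain ⟨t, htfin, htcov⟩ := Metric.totallyBounded_iff.mp hX.totallyBounded δc hδc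
  set D : ℕ → (Euc n →L[ℝ] Euc n) × Euc n := fun m => (Lop (φ m), u m) with hDdef
  have hDX : ∀ m, D m ∈ X := by
    intro m
    constructor
    · rw [Metric.mem_closedBall, dist_zero_right]
      refine ContinuousLinearMap.opNorm_le_bound _ zero_le_one (fun v => ?_)
      rw [Lop_apply, lin_norm hΓ (hφΓ m), one_mul]
    · rw [Metric.mem_closedBall, dist_zero_right]
      exact hu m
  have hν : ∀ m, ∃ y : ↥t, D m ∈ Metric.ball (y : (Euc n →L[ℝ] Euc n) × Euc n) δc := by
    intro m
    obtain ⟨y, hy, hm⟩ := Set.mem_iUnion₂.mp (htcov (hDX m))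
    exact ⟨⟨y, hy⟩, hm⟩
  choose ν hνb using hν
  have htfin' : Finite ↥t := htfin
  obtain ⟨y0, hy0⟩ := Finite.exists_infinite_fiber ν
  have hfib : (ν ⁻¹' {y0}).Infinite := Set.infinite_coe_iff.mp hy0
  -- spaced pair
  set sp : ℕ := ⌈2*R⌉₊ + 2 with hspdef
  obtain ⟨m, hm⟩ := hfib.nonempty
  obtain ⟨m', hm', hmm'⟩ := hfib.exists_gt (m + sp)
  have hdist : dist (D m') (D m) < 2*δc := by
    have h1 : dist (D m') (y0 : (Euc n →L[ℝ] Euc n) × Euc n) < δc := by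
      have := hνb m'
      rw [show ν m' = y0 from hm'] at this
      exact Metric.mem_ball.mp this
    have h2 : dist (D m) (y0 : (Euc n →L[ℝ] Euc n) × Euc n) < δc := by
      have := hνb m
      rw [show ν m = y0 from hm] at this
      exact Metric.mem_ball.mp this
    calc dist (D m') (D m) ≤ dist (D m') _ + dist (D m) _ := dist_triangle_right _ _ _
      _ < 2*δc := by linarith
  have hLL : ‖Lop (φ m') - Lop (φ m)‖ ≤ 2*δc := by
    have h1 : dist (Lop (φ m')) (Lop (φ m)) ≤ dist (D m') (D m) := by
      rw [Prod.dist_eq]; exact le_max_left _ _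
    rw [dist_eq_norm] at h1
    linarith [hdist]
  have huu : ‖u m' - u m‖ ≤ 2*δc := by
    have h1 : dist (u m') (u m) ≤ dist (D m') (D m) := by
      rw [Prod.dist_eq]; exact le_max_right _ _
    rw [dist_eq_norm] at h1
    linarith [hdist]
  -- the element
  set g : AffG n := φ m' * (φ m)⁻¹ with hgdef
  have hg : g ∈ Γ := mul_mem (hφΓ m') (inv_mem (hφΓ m))
  refine ⟨g, hg, ?_⟩
  -- key algebra for g 0
  set X0 : Euc n := (φ m').linear (((φ m)⁻¹).linear (u m)) with hX0def
  have hg0 : g 0 = u m' - X0 + ψ m' • ah - ψ m • ah := by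
    have e1 : ((φ m)⁻¹) (φ m 0) = 0 := by
      show ((φ m)⁻¹ * φ m) 0 = 0
      rw [inv_mul_cancel]; rfl
    have e2 : ((φ m)⁻¹) 0 = -(((φ m)⁻¹).linear (φ m 0)) := by
      have h3 := sub_apply ((φ m)⁻¹) 0 (φ m 0)
      rw [e1, sub_zero, zero_sub, map_neg] at h3
      exact h3
    have e3 : ((φ m)⁻¹).linear (φ m 0) = ((φ m)⁻¹).linear (u m) + ψ m • ah := by
      rw [hdecomp m, map_add, map_smul, lin_inv_fix (H1 (φ m) (hφΓ m))]
    have e4 : g 0 = (φ m') (((φ m)⁻¹) 0) := rfl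
    rw [e4, apply_eq (φ m'), e2, map_neg, e3, map_add, map_smul, H1 (φ m') (hφΓ m'),
      hdecomp m', ← hX0def]
    abel
  have hψg : ⟪g 0, ah⟫ = ψ m' - ψ m := by
    rw [hg0]
    rw [inner_sub_left, inner_add_left, inner_sub_left, real_inner_smul_left,
      real_inner_smul_left, hah2, mul_one, mul_one]
    have e5 : ⟪X0, ah⟫ = 0 := by
      rw [hX0def, hinner (φ m') (hφΓ m'), hinner ((φ m)⁻¹) (inv_mem (hφΓ m)), huah]
    rw [e5, huah]; ring
  have hψval : ψ m' - ψ m ≤ -1 := by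
    have h1 := hψm m
    have h2 := hψm m'
    have h3 : (m:ℝ) + (2*R) + 3 ≤ (m':ℝ) := by
      have h0 : m + sp + 1 ≤ m' := hmm'
      have h4 : ((m : ℕ) : ℝ) + ((sp : ℕ) : ℝ) + 1 ≤ (m' : ℝ) := by exact_mod_cast h0
      have h5 : (2*R) + 2 ≤ ((sp : ℕ) : ℝ) := by
        rw [hspdef]
        push_cast
        linarith [Nat.le_ceil (2*R)]
      linarith
    rw [abs_le] at h1 h2
    linarith [h1.1, h1.2, h2.1, h2.2]
  refine ⟨by rw [hψg]; exact hψval, ?_, ?_⟩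
  · -- linear estimate
    intro v
    set w : Euc n := ((φ m)⁻¹).linear v with hwdef
    have e6 : g.linear v = (φ m').linear w := by
      rw [hgdef, lin_mul]
    have e7 : v = (φ m).linear w := (lin_inv_apply (φ m) v).symm
    have e8 : ‖w‖ = ‖v‖ := lin_norm hΓ (inv_mem (hφΓ m)) v
    calc ‖g.linear v - v‖ = ‖(Lop (φ m') - Lop (φ m)) w‖ := by
          rw [ContinuousLinearMap.sub_apply, Lop_apply, Lop_apply, ← e6, ← e7]
      _ ≤ ‖Lop (φ m') - Lop (φ m)‖ * ‖w‖ := ContinuousLinearMap.le_opNorm _ _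
      _ ≤ (2*δc) * ‖v‖ := by rw [e8]; gcongr
      _ ≤ ε * ‖v‖ := by
          gcongr
          have hpos : (0:ℝ) < 6*(R+1) := by positivity
          rw [hδcdef]
          calc 2 * (ε / (6*(R+1))) = ε * (2/(6*(R+1))) := by ring
            _ ≤ ε * 1 := by
                have h6 : 2/(6*(R+1)) ≤ 1 := by rw [div_le_one hpos]; linarith
                exact mul_le_mul_of_nonneg_left h6 (le_of_lt hε)
            _ = ε := mul_one ε
  · -- E estimate
    have e9 : g 0 - ⟪g 0, ah⟫ • ah = u m' - X0 := by
      rw [hψg, hg0, sub_smul]; abel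
    rw [e9]
    have e10 : u m - X0 = (Lop (φ m) - Lop (φ m')) (((φ m)⁻¹).linear (u m)) := by
      rw [ContinuousLinearMap.sub_apply, Lop_apply, Lop_apply, ← hX0def,
        lin_inv_apply (φ m) (u m)]
    calc ‖u m' - X0‖ = ‖(u m' - u m) + (u m - X0)‖ := by congr 1; abel
      _ ≤ ‖u m' - u m‖ + ‖u m - X0‖ := norm_add_le _ _
      _ ≤ 2*δc + ‖Lop (φ m) - Lop (φ m')‖ * ‖((φ m)⁻¹).linear (u m)‖ := by
          gcongr
          rw [e10]
          exact ContinuousLinearMap.le_opNorm _ _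
      _ ≤ 2*δc + (2*δc) * (2*R) := by
          gcongr
          · rw [norm_sub_rev]; exact hLL
          · rw [lin_norm hΓ (inv_mem (hφΓ m))]; exact hu m
      _ ≤ ε := by
          have hpos : (0:ℝ) < 6*(R+1) := by positivity
          rw [hδcdef]
          calc 2 * (ε / (6*(R+1))) + 2 * (ε / (6*(R+1))) * (2*R)
              = ε * ((2 + 4*R)/(6*(R+1))) := by ring
            _ ≤ ε * 1 := by
                have h6 : (2 + 4*R)/(6*(R+1)) ≤ 1 := by rw [div_le_one hpos]; linarith
                exact mul_le_mul_of_nonneg_left h6 (le_of_lt hε)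
            _ = ε := mul_one ε


lemma conj_zero (f h : AffG n) :
    (f * h * f⁻¹) 0 = f 0 + f.linear (h 0) - (f * h * f⁻¹).linear (f 0) := by
  have e1 : f⁻¹ (f 0) = 0 := by
    show (f⁻¹ * f) 0 = 0
    rw [inv_mul_cancel]; rfl
  have e2 : f⁻¹ 0 = -(f⁻¹.linear (f 0)) := by
    have h3 := sub_apply f⁻¹ 0 (f 0)
    rw [e1, sub_zero, zero_sub, map_neg] at h3
    exact h3
  have e4 : ∀ v, (f * h * f⁻¹).linear v = f.linear (h.linear (f⁻¹.linear v)) := by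
    intro v; rw [lin_mul, lin_mul]
  have e3 : (f * h * f⁻¹) 0 = f (h (f⁻¹ 0)) := rfl
  rw [e3, apply_eq h (f⁻¹ 0), apply_eq f (h.linear (f⁻¹ 0) + h 0), map_add, e2, map_neg,
    map_neg, show f.linear (h.linear (f⁻¹.linear (f 0))) = (f*h*f⁻¹).linear (f 0) from
      (e4 (f 0)).symm]
  abel

lemma lin_conj (hΓ : IsSpaceGroup Γ) {g h : AffG n} (hg : g ∈ Γ) (hh : h ∈ Γ) (ε : ℝ)
    (hglin : ∀ v : Euc n, ‖g.linear v - v‖ ≤ ε * ‖v‖) (v : Euc n) :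
    ‖(g * h * g⁻¹).linear v - h.linear v‖ ≤ (2*ε) * ‖v‖ := by
  set y : Euc n := (g⁻¹).linear v with hy
  have e7 : g.linear y = v := lin_inv_apply g v
  have e8 : ‖y‖ = ‖v‖ := lin_norm hΓ (inv_mem hg) v
  have e9 : (g * h * g⁻¹).linear v = g.linear (h.linear y) := by rw [lin_mul, lin_mul]
  calc ‖(g * h * g⁻¹).linear v - h.linear v‖
      = ‖(g.linear (h.linear y) - h.linear y) + (h.linear y - h.linear (g.linear y))‖ := by
        rw [e9, e7]; congr 1; abel
    _ ≤ ‖g.linear (h.linear y) - h.linear y‖ + ‖h.linear y - h.linear (g.linear y)‖ :=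
        norm_add_le _ _
    _ ≤ ε * ‖v‖ + ε * ‖v‖ := by
        have hA : ‖g.linear (h.linear y) - h.linear y‖ ≤ ε * ‖v‖ := by
          calc ‖g.linear (h.linear y) - h.linear y‖ ≤ ε * ‖h.linear y‖ := hglin _
            _ = ε * ‖v‖ := by rw [lin_norm hΓ hh, e8]
        have hB : ‖h.linear y - h.linear (g.linear y)‖ ≤ ε * ‖v‖ := by
          calc ‖h.linear y - h.linear (g.linear y)‖ = ‖h.linear (y - g.linear y)‖ := by
                rw [map_sub]
            _ = ‖y - g.linear y‖ := lin_norm hΓ hh _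
            _ = ‖g.linear y - y‖ := norm_sub_rev _ _
            _ ≤ ε * ‖y‖ := hglin y
            _ = ε * ‖v‖ := by rw [e8]
        exact add_le_add hA hB
    _ = (2*ε) * ‖v‖ := by ring

/-- CRUX: there is a central element with nonzero drift along the invariant direction. -/
lemma exists_central (hΓ : IsSpaceGroup Γ) {ah : Euc n} (hah : ‖ah‖ = 1)
    (H1 : ∀ γ ∈ Γ, γ.linear ah = ah) :
    ∃ g ∈ Γ, (∀ γ ∈ Γ, g * γ = γ * g) ∧ ⟪g 0, ah⟫ ≠ 0 := by
  obtain ⟨R, hR, hcov⟩ := exists_R hΓ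
  have hdense : ∀ x : Euc n, ∃ δ ∈ Γ, ‖δ 0 - x‖ ≤ R := fun x => orbit_dense hΓ hcov x
  set S : Set (AffG n) := {g : AffG n | g ∈ Γ ∧ ‖g 0‖ ≤ 2*R + 1} with hSdef
  have hSfin : S.Finite := finite_ball hΓ (2*R+1)
  set S2 : Set (AffG n) := {q : AffG n | q ∈ Γ ∧ ‖q 0‖ ≤ 2*R + 2} with hS2def
  have hS2fin : S2.Finite := finite_ball hΓ (2*R+2)
  set dd : AffG n → AffG n → ℝ := fun q h => ‖q 0 - h 0‖ + ‖Lop q - Lop h‖ with hdddef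
  set DD : Set ℝ := (fun p : AffG n × AffG n => dd p.1 p.2) '' ((S2 ×ˢ S) ∩ {p | p.1 ≠ p.2})
    with hDDdef
  have hDDfin : DD.Finite := (((hS2fin.prod hSfin).inter_of_left _).image _)
  have hDDpos : ∀ x ∈ DD, 0 < x := by
    rintro x ⟨⟨q, h⟩, ⟨⟨_, _⟩, hne⟩, rfl⟩
    dsimp only
    rw [hdddef]
    dsimp only
    rcases eq_or_lt_of_le (add_nonneg (norm_nonneg (q 0 - h 0)) (norm_nonneg (Lop q - Lop h)))
      with heq | hlt
    · exfalso
      have h1 : ‖q 0 - h 0‖ = 0 ∧ ‖Lop q - Lop h‖ = 0 := by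
        constructor <;>
          nlinarith [norm_nonneg (q 0 - h 0), norm_nonneg (Lop q - Lop h)]
      apply hne
      dsimp only
      apply affg_ext
      · rw [← sub_eq_zero]
        exact norm_eq_zero.mp h1.1
      · intro v
        have h2 : Lop q - Lop h = 0 := norm_eq_zero.mp h1.2
        have h3 : (Lop q - Lop h) v = 0 := by rw [h2]; rfl
        rw [ContinuousLinearMap.sub_apply, Lop_apply, Lop_apply, sub_eq_zero] at h3
        exact h3
    · exact hlt
  obtain ⟨ρ, hρ, hρle⟩ := finite_min hDDfin hDDpos
  set ε : ℝ := min 1 ρ / (2*R + 6) with hεdef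
  have hmin : 0 < min 1 ρ := lt_min one_pos hρ
  have hεpos : 0 < ε := by
    rw [hεdef]
    apply div_pos hmin (by linarith)
  obtain ⟨g, hg, hgψ, hglin, hgE⟩ := approx_transl hΓ hah H1 hR hcov ε hεpos
  refine ⟨g, hg, ?_, by intro h0; rw [h0] at hgψ; linarith⟩
  have hcomm : ∀ h ∈ S, g * h = h * g := by
    intro h hhS
    obtain ⟨hhΓ, hh0⟩ := hhS
    set q : AffG n := g * h * g⁻¹ with hqdef
    have hqΓ : q ∈ Γ := mul_mem (mul_mem hg hhΓ) (inv_mem hg)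
    have hfixq : q.linear (⟪g 0, ah⟫ • ah) = ⟪g 0, ah⟫ • ah := by
      rw [map_smul, H1 q hqΓ]
    have hEq : q 0 - h 0 =
        ((g 0 - ⟪g 0, ah⟫ • ah) - q.linear (g 0 - ⟪g 0, ah⟫ • ah))
          + (g.linear (h 0) - h 0) := by
      have hk := conj_zero g h
      rw [← hqdef] at hk
      rw [hk, map_sub, hfixq]
      abel
    have bound1 : ‖q 0 - h 0‖ ≤ ε*(2*R+3) := by
      rw [hEq]
      calc ‖((g 0 - ⟪g 0, ah⟫ • ah) - q.linear (g 0 - ⟪g 0, ah⟫ • ah))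
            + (g.linear (h 0) - h 0)‖
          ≤ ‖(g 0 - ⟪g 0, ah⟫ • ah) - q.linear (g 0 - ⟪g 0, ah⟫ • ah)‖
            + ‖g.linear (h 0) - h 0‖ := norm_add_le _ _
        _ ≤ (‖g 0 - ⟪g 0, ah⟫ • ah‖ + ‖q.linear (g 0 - ⟪g 0, ah⟫ • ah)‖)
            + ε * ‖h 0‖ := by
            gcongr
            · exact norm_sub_le _ _
            · exact hglin _
        _ = (‖g 0 - ⟪g 0, ah⟫ • ah‖ + ‖g 0 - ⟪g 0, ah⟫ • ah‖) + ε * ‖h 0‖ := by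
            rw [lin_norm hΓ hqΓ]
        _ ≤ (ε + ε) + ε * (2*R+1) :=
            add_le_add (add_le_add hgE hgE) (mul_le_mul_of_nonneg_left hh0 hεpos.le)
        _ = ε*(2*R+3) := by ring
    have bound2 : ‖Lop q - Lop h‖ ≤ 2*ε := by
      refine ContinuousLinearMap.opNorm_le_bound _ (by linarith) (fun v => ?_)
      rw [ContinuousLinearMap.sub_apply, Lop_apply, Lop_apply, hqdef]
      exact lin_conj hΓ hg hhΓ ε hglin v
    have hqS2 : q ∈ S2 := by
      refine ⟨hqΓ, ?_⟩
      have h5 : ‖q 0‖ ≤ ‖h 0‖ + ‖q 0 - h 0‖ := by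
        calc ‖q 0‖ = ‖h 0 + (q 0 - h 0)‖ := by congr 1; abel
          _ ≤ ‖h 0‖ + ‖q 0 - h 0‖ := norm_add_le _ _
      have h6 : ε*(2*R+3) ≤ 1 := by
        rw [hεdef]
        calc min 1 ρ / (2*R + 6) * (2*R+3) = min 1 ρ * ((2*R+3)/(2*R+6)) := by ring
          _ ≤ 1 * 1 := by
              apply mul_le_mul (min_le_left _ _) _ (by positivity) zero_le_one
              rw [div_le_one (by linarith)]; linarith
          _ = 1 := mul_one 1
      linarith [bound1]
    by_cases hqh : q = h
    · rw [hqdef] at hqh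
      exact mul_inv_eq_iff_eq_mul.mp hqh
    · exfalso
      have hmem : dd q h ∈ DD := by
        rw [hDDdef]
        exact ⟨(q, h), ⟨⟨hqS2, ⟨hhΓ, hh0⟩⟩, hqh⟩, rfl⟩
      have h7 : ρ ≤ dd q h := hρle _ hmem
      have h8 : dd q h ≤ ε*(2*R+5) := by
        rw [hdddef]
        dsimp only
        calc ‖q 0 - h 0‖ + ‖Lop q - Lop h‖ ≤ ε*(2*R+3) + 2*ε :=
              add_le_add bound1 bound2
          _ = ε*(2*R+5) := by ring
      have h9 : ε*(2*R+5) < ρ := by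
        rw [hεdef]
        calc min 1 ρ / (2*R + 6) * (2*R+5) = min 1 ρ * ((2*R+5)/(2*R+6)) := by ring
          _ < min 1 ρ * 1 := by
              apply mul_lt_mul_of_pos_left _ hmin
              rw [div_lt_one (by linarith)]; linarith
          _ ≤ ρ := by rw [mul_one]; exact min_le_right _ _
      linarith
  intro γ hγ
  have hγcl : γ ∈ Subgroup.closure S := mem_closure_gen hΓ hR hdense hγ
  have hsub : Subgroup.closure S ≤ Subgroup.centralizer {g} := by
    apply (Subgroup.closure_le _).mpr
    intro h hhS
    rw [SetLike.mem_coe, Subgroup.mem_centralizer_iff]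
    intro y hy
    rw [Set.mem_singleton_iff.mp hy]
    exact hcomm h hhS
  have hcg := hsub hγcl
  rw [Subgroup.mem_centralizer_iff] at hcg
  exact hcg g rfl


end SGP
end

open SGP RealInnerProductSpace

/-- Lemma 10/12: an affinity `α = a + A` of `Eⁿ` centralizes `Γ` iff `A = I` and
`a ∈ Span Z(Γ)`; in particular the centralizer of `Γ` in `Aff(Eⁿ)` equals its centralizer
in `Isom(Eⁿ)` and consists of the translations by vectors of `Span Z(Γ)`. -/
theorem stmt9 {n : ℕ} (Γ Z : Subgroup (AffG n)) (hΓ : IsSpaceGroup Γ)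
    (hZ : ∀ f : AffG n, f ∈ Z ↔ f ∈ Γ ∧ ∀ γ ∈ Γ, f * γ = γ * f)
    (a : Euc n) (A : Euc n ≃ₗ[ℝ] Euc n) :
    (∀ γ ∈ Γ, ∀ x : Euc n, a + A (γ x) = γ (a + A x)) ↔
      A = LinearEquiv.refl ℝ (Euc n) ∧ a ∈ spanOf Z := by
  -- the fixed-vector lemma used in both directions
  have hZfix : ∀ γ ∈ Γ, ∀ v ∈ spanOf Z, γ.linear v = v := by
    intro γ hγ v hv
    have hle : spanOf Z ≤ LinearMap.eqLocus (γ.linear : Euc n →ₗ[ℝ] Euc n) LinearMap.id := by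
      apply Submodule.span_le.mpr
      intro b hb
      obtain ⟨hbΓ, hbc⟩ := (hZ (transl b)).mp hb
      have h := hbc γ hγ
      have h2 : transl b (γ 0) = γ (transl b 0) := by
        calc transl b (γ 0) = (transl b * γ) 0 := rfl
          _ = (γ * transl b) 0 := by rw [h]
          _ = γ (transl b 0) := rfl
      rw [transl_apply, transl_apply, add_zero] at h2
      have h3 : γ b = γ.linear b + γ 0 := apply_eq γ b
      rw [h3] at h2
      have h4 : γ.linear b = b := by
        have := add_right_cancel h2
        exact this.symm
      show (γ.linear : Euc n →ₗ[ℝ] Euc n) b = LinearMap.id b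
      simpa using h4
    exact hle hv
  constructor
  · intro hcomm
    have hA : ∀ v, A v = v := lin_id_of_comm hΓ a A hcomm
    have hAr : A = LinearEquiv.refl ℝ (Euc n) :=
      LinearEquiv.toLinearMap_injective (LinearMap.ext fun v => by simpa using hA v)
    refine ⟨hAr, ?_⟩
    -- Γ-linear parts fix a
    have H1a : ∀ γ ∈ Γ, γ.linear a = a := by
      intro γ hγ
      have h := hcomm γ hγ 0
      rw [hA (γ 0), hA 0, add_zero] at h
      rw [apply_eq γ a] at h
      exact (add_right_cancel h).symm
    by_contra hnotin
    set P : Euc n := (Submodule.orthogonalProjectionOnto (spanOf Z) a : Euc n) with hPdef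
    have hPS : P ∈ spanOf Z := (Submodule.orthogonalProjectionOnto (spanOf Z) a).2
    set a' : Euc n := a - P with ha'def
    have ha'ne : a' ≠ 0 := by
      intro h0
      apply hnotin
      have : a = P := by rwa [ha'def, sub_eq_zero] at h0
      rw [this]; exact hPS
    set ah : Euc n := ‖a'‖⁻¹ • a' with hahdef
    have hah : ‖ah‖ = 1 := norm_smul_inv_norm ha'ne
    have H1ah : ∀ γ ∈ Γ, γ.linear ah = ah := by
      intro γ hγ
      rw [hahdef, map_smul]
      congr 1
      rw [ha'def, map_sub, H1a γ hγ, hZfix γ hγ P hPS]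
    obtain ⟨g, hgΓ, hgc, hgne⟩ := exists_central hΓ hah H1ah
    -- g is a translation
    have hglin : ∀ v, g.linear v = v := by
      apply lin_id_of_comm hΓ (g 0) g.linear
      intro γ hγ x
      have h1 : g (γ x) = γ (g x) := by
        calc g (γ x) = (g * γ) x := rfl
          _ = (γ * g) x := by rw [hgc γ hγ]
          _ = γ (g x) := rfl
      have e1 : g 0 + g.linear (γ x) = g (γ x) := by rw [apply_eq g (γ x)]; abel
      have e2 : g 0 + g.linear x = g x := by rw [apply_eq g x]; abel
      rw [e1, e2, h1]
    have hgt : g = transl (g 0) := by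
      apply affg_ext
      · show g 0 = transl (g 0) 0
        rw [transl_apply, add_zero]
      · intro v
        rw [hglin v, lin_eq (transl (g 0)) v, transl_apply, transl_apply, add_zero]
        abel
    have hgZ : transl (g 0) ∈ Z := by
      rw [hZ]
      exact ⟨by rw [← hgt]; exact hgΓ, fun γ hγ => by rw [← hgt]; exact hgc γ hγ⟩
    have hg0S : g 0 ∈ spanOf Z := Submodule.subset_span hgZ
    have ha'o : a' ∈ (spanOf Z)ᗮ := by
      rw [ha'def, hPdef]
      exact Submodule.sub_starProjection_mem_orthogonal (K := spanOf Z) a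
    apply hgne
    rw [hahdef, real_inner_smul_right,
      (Submodule.mem_orthogonal (spanOf Z) a').mp ha'o (g 0) hg0S, mul_zero]
  · rintro ⟨hA, haS⟩
    subst hA
    intro γ hγ x
    simp only [LinearEquiv.refl_apply]
    have hfix : γ.linear a = a := hZfix γ hγ a haS
    have h4 : γ (a + x) = γ.linear a + γ x := by
      have h5 := apply_eq γ (a + x)
      have h6 : γ.linear (a + x) = γ.linear a + γ.linear x := map_add _ _ _
      rw [h6] at h5
      rw [h5, apply_eq γ x]
      abel
    rw [h4, hfix]
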